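/- Let (E,ℒ,𝒜) be a weakly left-resolving, normal labelled space and let (α,A,β), (μ,B,ν) ∈ S be nonzero. Then Z_{(α,A,β)} ∩ Z_{(μ,B,ν)} equals: Z_{(μ, r(A,δ)∩B, ν)} if μ = αδ and ν = βδ for some δ ∈ ℒ* with r(A,δ)∩B ≠ ∅; Z_{(α, A∩r(B,δ), β)} if α = μδ and β = νδ for some δ ∈ ℒ* with A∩r(B,δ) ≠ ∅; and ∅ otherwise. -/

import Mathlib

open Classical

universe u v w

/-! ## Words over an alphabet -/

/-- Finite-or-infinite words over the alphabet `A`: `Sum.inl l` is the finite word `l`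
(with `[]` playing the role of the empty word `ω`), and `Sum.inr f` is the infinite word `f`. -/
abbrev Word (A : Type w) := List A ⊕ (ℕ → A)

/-- The length `|α| ∈ ℕ∞` of a word. -/
def wlength {A : Type w} : Word A → ℕ∞ :=
  Sum.elim (fun l => (l.length : ℕ∞)) fun _ => ⊤

/-- The finite prefix `α_{1,n}` of a word `α`. -/
def wprefix {A : Type w} : Word A → ℕ → List A :=
  Sum.elim (fun l n => l.take n) fun f n => List.ofFn fun i : Fin n => f i

/-- Concatenation `αβ` of a finite word `α` with a word `β`. -/
def wappend {A : Type w} (α : List A) : Word A → Word A :=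
  Sum.elim (fun l => Sum.inl (α ++ l)) fun f =>
    Sum.inr fun n => if h : n < α.length then α.get ⟨n, h⟩ else f (n - α.length)

/-- `β` is a beginning (finite prefix) of the word `α`. -/
def WPrefix {A : Type w} (β : List A) : Word A → Prop :=
  Sum.elim (fun l => β <+: l) fun f => β = List.ofFn fun i : Fin β.length => f i

/-! ## Triples -/

/-- Formal triples `(α, X, β)` together with a zero element; the inverse semigroup `S`
of a labelled space consists of such elements. -/
inductive Tr (V : Type u) (A : Type w) where
  | zero : Tr V A
  | mk : List A → Set V → List A → Tr V A

/-- The involution `(α,A,β)* = (β,A,α)` (fixing `0`). -/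
def Tr.tstar {V : Type u} {A : Type w} : Tr V A → Tr V A
  | .zero => .zero
  | .mk α X β => .mk β X α

/-! ## Labelled spaces -/

/-- The data of a labelled space `(E, ℒ, 𝒜)`: a directed graph on nonempty vertex/edge
sets, a surjective labelling map onto the alphabet `A`, and a family `𝒜` of subsets
of the vertex set. -/
structure LblSp (V : Type u) (E : Type v) (A : Type w) where
  src : E → V
  rng : E → V
  lab : E → A
  lab_surj : Function.Surjective lab
  nonempty_V : Nonempty V
  nonempty_E : Nonempty E
  𝒜 : Set (Set V)

namespace LblSp

variable {V : Type u} {Ed : Type v} {A : Type w} (Λ : LblSp V Ed A)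

/-- `α ≠ ω` is the label of some finite path of the graph. -/
def IsPathLabel (α : List A) : Prop :=
  ∃ l : List Ed, l ≠ [] ∧ List.Chain' (fun e f => Λ.rng e = Λ.src f) l ∧ l.map Λ.lab = α

/-- `ℒ^*`: the finite labelled paths, together with the empty word. -/
def LStar : Set (List A) := {α | α = [] ∨ Λ.IsPathLabel α}

/-- `ℒ^∞`: the infinite labelled paths. -/
def LInfty : Set (ℕ → A) :=
  {f | ∃ e : ℕ → Ed, (∀ n, Λ.rng (e n) = Λ.src (e (n + 1))) ∧ ∀ n, Λ.lab (e n) = f n}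

/-- `ℒ^{≤∞} = ℒ^* ∪ ℒ^∞`, as a predicate on `Word A`. -/
def IsWordW : Word A → Prop := Sum.elim (· ∈ Λ.LStar) (· ∈ Λ.LInfty)

/-- The relative range `r(X, α)` (with `r(X, ω) = X`). -/
noncomputable def relRange (X : Set V) (α : List A) : Set V :=
  if α = [] then X
  else {v | ∃ (l : List Ed) (h : l ≠ []), List.Chain' (fun e f => Λ.rng e = Λ.src f) l ∧
        l.map Λ.lab = α ∧ Λ.src (l.head h) ∈ X ∧ Λ.rng (l.getLast h) = v}

/-- The range `r(α) = r(E⁰, α)`. -/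
noncomputable def rangeL (α : List A) : Set V := Λ.relRange Set.univ α

/-- `𝒜^α = {X ∈ 𝒜 : X ⊆ r(α)}`. -/
noncomputable def Aset (α : List A) : Set (Set V) := {X | X ∈ Λ.𝒜 ∧ X ⊆ Λ.rangeL α}

/-- `(E, ℒ, 𝒜)` is a labelled space: `𝒜` is closed under finite intersections and
unions, contains all ranges `r(α)` for `α ∈ ℒ^{≥1}`, and is closed under relative ranges. -/
structure IsLS : Prop where
  inter_mem : ∀ X ∈ Λ.𝒜, ∀ Y ∈ Λ.𝒜, X ∩ Y ∈ Λ.𝒜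
  union_mem : ∀ X ∈ Λ.𝒜, ∀ Y ∈ Λ.𝒜, X ∪ Y ∈ Λ.𝒜
  range_mem : ∀ α ∈ Λ.LStar, α ≠ [] → Λ.rangeL α ∈ Λ.𝒜
  relRange_mem : ∀ X ∈ Λ.𝒜, ∀ α ∈ Λ.LStar, Λ.relRange X α ∈ Λ.𝒜

/-- A weakly left-resolving labelled space. -/
structure IsWLR : Prop where
  toIsLS : Λ.IsLS
  wlr : ∀ X ∈ Λ.𝒜, ∀ Y ∈ Λ.𝒜, ∀ α ∈ Λ.LStar, α ≠ [] →
    Λ.relRange (X ∩ Y) α = Λ.relRange X α ∩ Λ.relRange Y α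

/-- A weakly left-resolving normal labelled space. -/
structure IsNormal : Prop where
  toIsWLR : Λ.IsWLR
  sdiff_mem : ∀ X ∈ Λ.𝒜, ∀ Y ∈ Λ.𝒜, X \ Y ∈ Λ.𝒜

/-! ## The inverse semigroup `S` -/

/-- The underlying set of the inverse semigroup
`S = {(α,A,β) : α, β ∈ ℒ^*, A ∈ 𝒜^α ∩ 𝒜^β, A ≠ ∅} ∪ {0}`. -/
def SSet : Set (Tr V A) :=
  {t | t = Tr.zero ∨ ∃ α X β, t = Tr.mk α X β ∧ α ∈ Λ.LStar ∧ β ∈ Λ.LStar ∧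
    X ∈ Λ.Aset α ∧ X ∈ Λ.Aset β ∧ X.Nonempty}

/-- The semilattice of idempotents `E(S) = {(α,A,α)} ∪ {0}`. -/
def ESet : Set (Tr V A) :=
  {t | t = Tr.zero ∨ ∃ α X, t = Tr.mk α X α ∧ α ∈ Λ.LStar ∧ X ∈ Λ.Aset α ∧ X.Nonempty}

/-- The product of `S`. -/
noncomputable def tmul : Tr V A → Tr V A → Tr V A
  | Tr.zero, _ => Tr.zero
  | Tr.mk _ _ _, Tr.zero => Tr.zero
  | Tr.mk α X β, Tr.mk γ Y δ =>
    if β <+: γ ∧ (Λ.relRange X (γ.drop β.length) ∩ Y).Nonempty then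
      Tr.mk (α ++ γ.drop β.length) (Λ.relRange X (γ.drop β.length) ∩ Y) δ
    else if γ <+: β ∧ (X ∩ Λ.relRange Y (β.drop γ.length)).Nonempty then
      Tr.mk α (X ∩ Λ.relRange Y (β.drop γ.length)) (δ ++ β.drop γ.length)
    else Tr.zero

/-! ## Filters in `E(S)`, characters, and the tight spectrum -/

/-- A filter in `E(S)`: a nonempty subset of `E(S) ∖ {0}` closed under products and
upward closed in the natural order (`p ≤ q ↔ pq = p`). -/
def IsFilterES (ξ : Set (Tr V A)) : Prop :=
  ξ.Nonempty ∧ (∀ t ∈ ξ, t ∈ Λ.ESet ∧ t ≠ Tr.zero) ∧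
  (∀ p ∈ ξ, ∀ q ∈ ξ, Λ.tmul p q ∈ ξ) ∧
  (∀ p ∈ ξ, ∀ q ∈ Λ.ESet, Λ.tmul p q = p → q ∈ ξ)

/-- An ultrafilter in `E(S)`. -/
def IsUltraES (ξ : Set (Tr V A)) : Prop :=
  Λ.IsFilterES ξ ∧ ∀ ζ, Λ.IsFilterES ζ → ξ ⊆ ζ → ξ = ζ

/-- The character (indicator function) of a filter. -/
noncomputable def charOf (_Λ : LblSp V Ed A) (ξ : Set (Tr V A)) : Tr V A → Bool :=
  fun t => if t ∈ ξ then true else false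

/-- A character of `E(S)`: a nonzero, zero- and meet-preserving `{0,1}`-valued map on
`E(S)` (encoded as a map on triples vanishing outside `E(S)`). -/
def IsChar (φ : Tr V A → Bool) : Prop :=
  (∃ e, φ e = true) ∧ (∀ e, e ∉ Λ.ESet → φ e = false) ∧ φ Tr.zero = false ∧
  ∀ e ∈ Λ.ESet, ∀ f ∈ Λ.ESet, φ (Λ.tmul e f) = (φ e && φ f)

/-- The tight spectrum `Ê_tight`: the closure, within the space of characters with the
topology of pointwise convergence, of the set of characters of ultrafilters. -/
def tightSpectrum : Set (Tr V A → Bool) :=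
  {φ | Λ.IsChar φ} ∩ closure {φ | ∃ ξ, Λ.IsUltraES ξ ∧ φ = Λ.charOf ξ}

/-- A tight filter: a filter whose character lies in the tight spectrum. -/
def IsTightFilter (ξ : Set (Tr V A)) : Prop :=
  Λ.IsFilterES ξ ∧ Λ.charOf ξ ∈ Λ.tightSpectrum

/-- `ξ_{|β|} = {B : (β, B, β) ∈ ξ}`, the filter of `ξ` at level `β`. -/
def filterAt (_Λ : LblSp V Ed A) (ξ : Set (Tr V A)) (β : List A) : Set (Set V) :=
  {B | Tr.mk β B β ∈ ξ}

/-- `α` is the word associated with the filter `ξ` (i.e. `ξ = ξ^α`): the nonempty finite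
beginnings of `α` are exactly the words appearing in elements of `ξ`. -/
def HasWord (_Λ : LblSp V Ed A) (ξ : Set (Tr V A)) (α : Word A) : Prop :=
  ∀ β : List A, β ≠ [] → ((∃ B, Tr.mk β B β ∈ ξ) ↔ WPrefix β α)

/-! ## Filters and ultrafilters in `𝒜^β` -/

/-- A filter in the Boolean algebra `𝒜^β`. -/
def IsFilterAset (β : List A) (F : Set (Set V)) : Prop :=
  F.Nonempty ∧ F ⊆ Λ.Aset β ∧ (∀ X ∈ F, X.Nonempty) ∧
  (∀ X ∈ F, ∀ Y ∈ F, X ∩ Y ∈ F) ∧ (∀ X ∈ F, ∀ Y ∈ Λ.Aset β, X ⊆ Y → Y ∈ F)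

/-- An ultrafilter in `𝒜^β` (an element of `X_β`). -/
def IsUltraAset (β : List A) (F : Set (Set V)) : Prop :=
  Λ.IsFilterAset β F ∧ ∀ G, Λ.IsFilterAset β G → F ⊆ G → F = G

/-- The gluing map `g_{(α)β}(F) = {C ∩ r(αβ) : C ∈ F}` on ultrafilters. -/
noncomputable def gmap (α β : List A) (F : Set (Set V)) : Set (Set V) :=
  {X | ∃ C ∈ F, X = C ∩ Λ.rangeL (α ++ β)}

/-- The cutting map `h_{[α]β}(F) = {C ∈ 𝒜^β : D ⊆ C for some D ∈ F}` on ultrafilters. -/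
noncomputable def hmap (α β : List A) (F : Set (Set V)) : Set (Set V) :=
  {C | C ∈ Λ.Aset β ∧ ∃ D ∈ F, D ⊆ C}

/-! ## Cutting and gluing of (tight) filters in `E(S)` -/

/-- The cutting map `H_{[α]β} : T^{αβ} → T^{(α)β}` (word-free formulation): the filter
whose family is `η_n = h_{[α]β_{1,n}}(ξ_{n+|α|})`; `H_{[ω]β}` is the identity. -/
noncomputable def Hcut (α : List A) (ξ : Set (Tr V A)) : Set (Tr V A) :=
  if α = [] then ξ
  else {t | ∃ δ B, t = Tr.mk δ B δ ∧ B ∈ Λ.Aset δ ∧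
        ∃ D, Tr.mk (α ++ δ) D (α ++ δ) ∈ ξ ∧ D ⊆ B}

/-- The gluing map `G_{(α)β} : T^{(α)β} → T^{αβ}` (word-free formulation): the filter with
family `η_{|α|+n} = g_{(α)β_{1,n}}(ξ_n)` for `n ≥ 1` and `η_i = f_{α_{1,i}[…]}(…)` for
`i ≤ |α|`, with the two cases according to whether the word of `ξ` is empty (`β = ω`)
or not; `G_{(ω)β}` is the identity. -/
noncomputable def Gglue (α : List A) (ξ : Set (Tr V A)) : Set (Tr V A) :=
  if α = [] then ξ
  else if ∃ (δ : List A) (B : Set V), δ ≠ [] ∧ Tr.mk δ B δ ∈ ξ then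
    {t | ∃ δ B, t = Tr.mk δ B δ ∧
      ((α <+: δ ∧ α ≠ δ ∧ ∃ C, Tr.mk (δ.drop α.length) C (δ.drop α.length) ∈ ξ ∧
          B = C ∩ Λ.rangeL δ) ∨
       (δ <+: α ∧ B ∈ Λ.Aset δ ∧ ∃ (b : A) (C : Set V), Tr.mk [b] C [b] ∈ ξ ∧
          Λ.relRange B (α.drop δ.length ++ [b]) = C ∩ Λ.rangeL (α ++ [b])))}
  else
    {t | ∃ δ B, t = Tr.mk δ B δ ∧ δ <+: α ∧ B ∈ Λ.Aset δ ∧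
      ∃ C, Tr.mk [] C [] ∈ ξ ∧ Λ.relRange B (α.drop δ.length) = C ∩ Λ.rangeL α}

/-- `T^β`: the set of tight filters with associated word `β`. -/
def TWord (β : Word A) : Set (Set (Tr V A)) :=
  {ξ | Λ.IsTightFilter ξ ∧ Λ.HasWord ξ β}

/-- `T^{(α)β} = {ξ ∈ T^β : r(α) ∈ ξ_0}` (equal to `T^β` when `α = ω`), the domain of the
gluing map `G_{(α)β}`. -/
def TGlueDom (α : List A) (β : Word A) : Set (Set (Tr V A)) :=
  {ξ | Λ.IsTightFilter ξ ∧ Λ.HasWord ξ β ∧ (α ≠ [] → Tr.mk [] (Λ.rangeL α) [] ∈ ξ)}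

/-! ## The groupoid `Γ` -/

/-- The defining relation of
`Γ = {(ξ^{aγ}, |a|-|b|, η^{bγ}) ∈ T × ℤ × T : H_{[a]γ}(ξ^{aγ}) = H_{[b]γ}(η^{bγ})}`. -/
def InGamma (η : Set (Tr V A)) (m : ℤ) (ξ : Set (Tr V A)) : Prop :=
  ∃ (a b : List A) (γ : Word A), a ∈ Λ.LStar ∧ b ∈ Λ.LStar ∧ Λ.IsWordW γ ∧
    η ∈ Λ.TWord (wappend a γ) ∧ ξ ∈ Λ.TWord (wappend b γ) ∧
    m = (a.length : ℤ) - (b.length : ℤ) ∧ Λ.Hcut a η = Λ.Hcut b ξ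

/-- `Γ` as a set of raw triples. -/
def GammaRaw : Set (Set (Tr V A) × ℤ × Set (Tr V A)) :=
  {p | Λ.InGamma p.1 p.2.1 p.2.2}

/-- The basic set `Z_{s,e:e₁,…,eₙ}` of `Γ` (raw version), for `s = (μ, X, ν)`:
triples `(η^{μγ}, |μ|-|ν|, ξ^{νγ}) ∈ Γ` with `e ∈ ξ`, `eᵢ ∉ ξ` and
`H_{[μ]γ}(η) = H_{[ν]γ}(ξ)`. -/
noncomputable def ZrawGen (μ ν : List A) (e : Tr V A) (es : List (Tr V A)) :
    Set (Set (Tr V A) × ℤ × Set (Tr V A)) :=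
  {p | Λ.InGamma p.1 p.2.1 p.2.2 ∧ p.2.1 = (μ.length : ℤ) - (ν.length : ℤ) ∧
       e ∈ p.2.2 ∧ (∀ f ∈ es, f ∉ p.2.2) ∧
       ∃ γ : Word A, Λ.HasWord p.1 (wappend μ γ) ∧ Λ.HasWord p.2.2 (wappend ν γ) ∧
         Λ.Hcut μ p.1 = Λ.Hcut ν p.2.2}

/-- `Z_s = Z_{s, s*s}` for `s = (μ, X, ν)` (raw version). -/
noncomputable def Zraw (μ : List A) (X : Set V) (ν : List A) :
    Set (Set (Tr V A) × ℤ × Set (Tr V A)) :=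
  Λ.ZrawGen μ ν (Tr.mk ν X ν) []

/-- The basic set `V_{e:e₁,…,eₙ} = U_{e:e₁,…,eₙ} ∩ T` of the tight filter space
(raw version). -/
def VrawGen (e : Tr V A) (es : List (Tr V A)) : Set (Set (Tr V A)) :=
  {ξ | Λ.IsTightFilter ξ ∧ e ∈ ξ ∧ ∀ f ∈ es, f ∉ ξ}

/-- The shift map `σ : T^{(1)} → T`, `σ(ξ^{aγ}) = H_{[a]γ}(ξ^{aγ})` (extended by the
identity off its domain). -/
noncomputable def sigmaMap (ξ : Set (Tr V A)) : Set (Tr V A) :=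
  if h : ∃ a : A, ∃ B : Set V, Tr.mk [a] B [a] ∈ ξ then Λ.Hcut [h.choose] ξ else ξ

/-- The Renault–Deaconu basic set
`𝒱(X, Y, m, n) = {(η, m-n, ξ) ∈ Γ : (η, ξ) ∈ X × Y, σ^m(η) = σ^n(ξ)}` (raw version). -/
noncomputable def VrdRaw (Xs Ys : Set (Set (Tr V A))) (m n : ℕ) :
    Set (Set (Tr V A) × ℤ × Set (Tr V A)) :=
  {p | Λ.InGamma p.1 p.2.1 p.2.2 ∧ p.2.1 = (m : ℤ) - (n : ℤ) ∧
       p.1 ∈ Xs ∧ p.2.2 ∈ Ys ∧ (Λ.sigmaMap)^[m] p.1 = (Λ.sigmaMap)^[n] p.2.2}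

/-! ## The groupoid of germs `𝒢_tight` -/

/-- The action `θ_s(φ)(e) = φ(s* e s)` of `S` on characters. -/
noncomputable def theta (s : Tr V A) (φ : Tr V A → Bool) : Tr V A → Bool :=
  fun e => if e ∈ Λ.ESet then φ (Λ.tmul (Λ.tmul (Tr.tstar s) e) s) else false

/-- `Ω = {(s, φ) ∈ S × Ê_tight : φ ∈ D_{s*s}}`. -/
noncomputable def Omega : Set (Tr V A × (Tr V A → Bool)) :=
  {p | p.1 ∈ Λ.SSet ∧ p.2 ∈ Λ.tightSpectrum ∧ p.2 (Λ.tmul (Tr.tstar p.1) p.1) = true}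

/-- The germ equivalence relation on `Ω`: `(s,φ) ∼ (t,ψ)` iff `φ = ψ` and there is
`e ∈ E(S)` with `φ(e) = 1` and `se = te`. -/
noncomputable def germEquiv (p q : Tr V A × (Tr V A → Bool)) : Prop :=
  p.2 = q.2 ∧ ∃ e ∈ Λ.ESet, p.2 e = true ∧ Λ.tmul p.1 e = Λ.tmul q.1 e

/-- The map `Φ` at the level of `Ω`: for `t = (β, X, γ)` and `φ` with filter `ξ^α`
(where `α = γα'`), `Φ[t,φ] = ((G_{(β)α'} ∘ H_{[γ]α'})(ξ^α), |β|-|γ|, ξ^α)`. -/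
noncomputable def PhiRaw : Tr V A → (Tr V A → Bool) → Set (Tr V A) × ℤ × Set (Tr V A)
  | Tr.zero, _ => (∅, 0, ∅)
  | Tr.mk β _ γ, φ =>
      (Λ.Gglue β (Λ.Hcut γ {e | φ e = true}), (β.length : ℤ) - (γ.length : ℤ),
        {e | φ e = true})

/-! ## Miscellaneous notions -/

/-- `ℒ(XE¹) = {ℒ(e) : e ∈ E¹, s(e) ∈ X}`. -/
def labE (X : Set V) : Set A := {a | ∃ e, Λ.lab e = a ∧ Λ.src e ∈ X}

/-- The set `E⁰_sink` of sinks. -/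
def sinks : Set V := {v | ∀ e, Λ.src e ≠ v}

/-- The filter in `E(S)` associated with a pair (word, complete family). -/
def pairFilter (_Λ : LblSp V Ed A) (α : Word A) (F : ℕ → Set (Set V)) : Set (Tr V A) :=
  {t | ∃ (n : ℕ) (B : Set V), (n : ℕ∞) ≤ wlength α ∧ B ∈ F n ∧
    t = Tr.mk (wprefix α n) B (wprefix α n)}

/-- A complete family for the word `α`: `F n` is a filter in `𝒜^{α_{1,n}}` for
`1 ≤ n ≤ |α|` (`F 0` is a filter in `𝒜` or empty, and a filter if `α = ω`), and
`F n = {X ∈ 𝒜^{α_{1,n}} : r(X, α_{n+1}) ∈ F (n+1)}` for all `n < |α|`. -/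
noncomputable def IsCompleteFamily (α : Word A) (F : ℕ → Set (Set V)) : Prop :=
  Λ.IsWordW α ∧
  (∀ n : ℕ, 1 ≤ n → (n : ℕ∞) ≤ wlength α → Λ.IsFilterAset (wprefix α n) (F n)) ∧
  (F 0 = ∅ ∨ Λ.IsFilterAset [] (F 0)) ∧
  (wlength α = 0 → Λ.IsFilterAset [] (F 0)) ∧
  (∀ n : ℕ, ((n + 1 : ℕ) : ℕ∞) ≤ wlength α →
    F n = {X | X ∈ Λ.Aset (wprefix α n) ∧
      Λ.relRange X ((wprefix α (n + 1)).drop n) ∈ F (n + 1)})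

/-! ## The tight filter space `T` and the groupoid `Γ` as types -/

/-- The space `T` of tight filters. -/
structure TightT where
  carrier : Set (Tr V A)
  tight : Λ.IsTightFilter carrier

/-- The topology of `T`, induced from pointwise convergence of characters. -/
noncomputable instance : TopologicalSpace Λ.TightT :=
  TopologicalSpace.induced (fun ξ => Λ.charOf ξ.carrier) inferInstance

/-- The groupoid `Γ ⊆ T × ℤ × T` as a type. -/
structure GammaT where
  fst : Λ.TightT
  mid : ℤ
  lst : Λ.TightT
  mem : Λ.InGamma fst.carrier mid lst.carrier

/-- The raw triple underlying an element of `Γ`. -/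
def rawOf (p : Λ.GammaT) : Set (Tr V A) × ℤ × Set (Tr V A) :=
  (p.fst.carrier, p.mid, p.lst.carrier)

/-- The collection of all sets `Z_{s,e:e₁,…,eₙ}` (for `s ∈ S`, `e, eᵢ ∈ E(S)`),
as subsets of `Γ`. -/
noncomputable def ZBasisT : Set (Set Λ.GammaT) :=
  {Z | ∃ (μ : List A) (X : Set V) (ν : List A) (e : Tr V A) (es : List (Tr V A)),
    Tr.mk μ X ν ∈ Λ.SSet ∧ e ∈ Λ.ESet ∧ (∀ f ∈ es, f ∈ Λ.ESet) ∧
    Z = {p : Λ.GammaT | Λ.rawOf p ∈ Λ.ZrawGen μ ν e es}}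

/-- The topology on `Γ` induced by the isomorphism `Φ` from the germ topology of
`𝒢_tight`, generated by the images of the basic sets `Θ(s, 𝒰)` with `𝒰 ⊆ D_{s*s}`
open in the tight spectrum. -/
noncomputable def PhiTopology : TopologicalSpace Λ.GammaT :=
  TopologicalSpace.generateFrom
    {Z | ∃ (s : Tr V A) (U : Set (Tr V A → Bool)), s ∈ Λ.SSet ∧
      (∃ W, IsOpen W ∧ U = W ∩ Λ.tightSpectrum) ∧
      (∀ φ ∈ U, φ (Λ.tmul (Tr.tstar s) s) = true) ∧
      Z = {p : Λ.GammaT | ∃ φ ∈ U, (s, φ) ∈ Λ.Omega ∧ Λ.PhiRaw s φ = Λ.rawOf p}}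

end LblSp

namespace LblSp

variable {V : Type u} {Ed : Type v} {A : Type w} (Λ : LblSp V Ed A)

/-! ### Auxiliary lemmas on words -/

lemma wprefix_inr_iff {b : List A} {f : ℕ → A} :
    WPrefix b (Sum.inr f) ↔ ∀ i (h : i < b.length), b[i] = f i := by
  unfold WPrefix
  simp only [Sum.elim_inr]
  constructor
  · intro h i hi
    rw [List.getElem_of_eq h, List.getElem_ofFn]
  · intro h
    refine List.ext_getElem (by simp) ?_
    intro i h1 h2
    rw [List.getElem_ofFn]
    exact h i h1

lemma wprefix_nil (γ : Word A) : WPrefix [] γ := by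
  cases γ with
  | inl l => exact List.nil_prefix
  | inr f => rw [wprefix_inr_iff]; intro i hi; simp at hi

lemma wappend_nil (γ : Word A) : wappend [] γ = γ := by
  cases γ with
  | inl l => simp [wappend]
  | inr f => simp [wappend]

lemma wappend_assoc (a b : List A) (γ : Word A) :
    wappend a (wappend b γ) = wappend (a ++ b) γ := by
  cases γ with
  | inl l => simp [wappend, List.append_assoc]
  | inr f =>
    simp only [wappend, Sum.elim_inr, Sum.inr.injEq]
    funext n
    rcases lt_or_ge n a.length with h | h
    · rw [dif_pos h, dif_pos (by simp; omega)]
      simp [List.getElem_append_left h]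
    · rw [dif_neg (by omega)]
      rcases lt_or_ge n (a.length + b.length) with h2 | h2
      · rw [dif_pos (by omega), dif_pos (by simp; omega)]
        have : a.length ≤ n := h
        simp [List.getElem_append_right this]
      · rw [dif_neg (by omega), dif_neg (by simp; omega)]
        congr 1
        simp; omega

lemma wprefix_append_iff (a b : List A) (γ : Word A) :
    WPrefix (a ++ b) (wappend a γ) ↔ WPrefix b γ := by
  cases γ with
  | inl l =>
    simp only [WPrefix, wappend, Sum.elim_inl]
    constructor
    · rintro ⟨t, ht⟩
      exact ⟨t, by rwa [List.append_assoc, List.append_cancel_left_eq] at ht⟩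
    · rintro ⟨t, ht⟩
      exact ⟨t, by rw [List.append_assoc, ht]⟩
  | inr f =>
    simp only [wappend, Sum.elim_inr, wprefix_inr_iff]
    constructor
    · intro h i hi
      have := h (a.length + i) (by simp; omega)
      rw [List.getElem_append_right (by omega : a.length ≤ a.length + i)] at this
      simp only [Nat.add_sub_cancel_left,
        dif_neg (show ¬ a.length + i < a.length by omega)] at this
      exact this
    · intro h i hi
      simp only [List.length_append] at hi
      rcases lt_or_ge i a.length with h2 | h2
      · rw [List.getElem_append_left h2, dif_pos h2]
        rfl
      · rw [List.getElem_append_right h2, dif_neg (by omega)]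
        exact h (i - a.length) (by omega)

lemma wprefix_self (a : List A) (γ : Word A) : WPrefix a (wappend a γ) := by
  have := (wprefix_append_iff a [] γ).2 (wprefix_nil γ)
  simpa using this

lemma wprefix_prefix {b c : List A} {γ : Word A} (hbc : b <+: c) (hc : WPrefix c γ) :
    WPrefix b γ := by
  cases γ with
  | inl l => exact hbc.trans hc
  | inr f =>
    rw [wprefix_inr_iff] at hc ⊢
    intro i hi
    rw [hbc.getElem hi]
    exact hc i (lt_of_lt_of_le hi hbc.length_le)

lemma wprefix_comp {b c : List A} {γ : Word A} (hb : WPrefix b γ) (hc : WPrefix c γ)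
    (h : b.length ≤ c.length) : b <+: c := by
  cases γ with
  | inl l => exact List.prefix_of_prefix_length_le hb hc h
  | inr f =>
    rw [wprefix_inr_iff] at hb hc
    refine ⟨c.drop b.length, List.ext_getElem (by simp; omega) ?_⟩
    intro i h1 h2
    rcases lt_or_ge i b.length with h3 | h3
    · rw [List.getElem_append_left h3, hb i h3, hc i (by omega)]
    · rw [List.getElem_append_right h3, List.getElem_drop]
      congr 1; omega

lemma wprefix_eq {b c : List A} {γ : Word A} (hb : WPrefix b γ) (hc : WPrefix c γ)
    (h : b.length = c.length) : b = c :=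
  (wprefix_comp hb hc h.le).eq_of_length h

lemma prefix_cancel {a b c : List A} (h : a ++ b <+: a ++ c) : b <+: c := by
  obtain ⟨t, ht⟩ := h
  exact ⟨t, by simpa [List.append_assoc] using ht⟩

/-! ### Auxiliary lemmas on ranges and labelled paths -/

lemma relRange_nil (X : Set V) : Λ.relRange X [] = X := if_pos rfl

lemma rangeL_nil : Λ.rangeL [] = Set.univ := Λ.relRange_nil Set.univ

lemma relRange_mono {X Y : Set V} (h : X ⊆ Y) (τ : List A) :
    Λ.relRange X τ ⊆ Λ.relRange Y τ := by
  unfold relRange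
  split
  · exact h
  · rintro v ⟨l, hne, hch, hmap, hsrc, hlast⟩
    exact ⟨l, hne, hch, hmap, h hsrc, hlast⟩

lemma nonempty_of_relRange {X : Set V} {τ : List A}
    (h : (Λ.relRange X τ).Nonempty) : X.Nonempty := by
  unfold relRange at h
  split at h
  · exact h
  · obtain ⟨v, l, hne, hch, hmap, hsrc, hlast⟩ := h
    exact ⟨_, hsrc⟩

lemma rangeL_append (a b : List A) : Λ.rangeL (a ++ b) ⊆ Λ.rangeL b := by
  rcases eq_or_ne b [] with rfl | hb
  · rw [Λ.rangeL_nil]; exact Set.subset_univ _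
  rcases eq_or_ne a [] with rfl | ha
  · simp
  intro v hv
  rw [rangeL, relRange, if_neg (by simp [ha])] at hv
  obtain ⟨l, hne, hch, hmap, -, hlast⟩ := hv
  have hlen : l.length = a.length + b.length := by
    have := congrArg List.length hmap; simpa using this
  have hl2ne : l.drop a.length ≠ [] := by
    intro h0
    have := congrArg List.length h0
    simp only [List.length_drop, List.length_nil] at this
    have hbl : 0 < b.length := List.length_pos_iff.mpr hb
    omega
  rw [rangeL, relRange, if_neg hb]
  refine ⟨l.drop a.length, hl2ne, hch.suffix (List.drop_suffix _ _), ?_, trivial, ?_⟩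
  · rw [List.map_drop, hmap, List.drop_left]
  · have e3 : l.getLast hne = (l.drop a.length).getLast hl2ne := by
      have hne' : l.take a.length ++ l.drop a.length ≠ [] := by
        rw [List.take_append_drop]; exact hne
      have e1 := List.getLast?_eq_getLast hne
      have e2 : l.getLast? = some ((l.drop a.length).getLast hl2ne) := by
        conv_lhs => rw [← List.take_append_drop a.length l]
        rw [List.getLast?_eq_getLast hne', List.getLast_append_of_ne_nil _ hl2ne]
      rw [e1] at e2
      exact Option.some.inj e2
    rw [← hlast, e3]

lemma lstar_take {w : List A} (hw : w ∈ Λ.LStar) (n : ℕ) : w.take n ∈ Λ.LStar := by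
  rcases eq_or_ne (w.take n) [] with h | h
  · exact Or.inl h
  rcases hw with rfl | ⟨l, hne, hch, hmap⟩
  · simp at h
  right
  refine ⟨l.take n, ?_, hch.prefix (List.take_prefix _ _), ?_⟩
  · intro h0
    apply h
    rw [← hmap, ← List.map_take, h0, List.map_nil]
  · rw [List.map_take, hmap]

lemma lstar_prefix {b w : List A} (h : b <+: w) (hw : w ∈ Λ.LStar) : b ∈ Λ.LStar := by
  have := Λ.lstar_take hw b.length
  rwa [← List.prefix_iff_eq_take.mp h] at this

lemma lstar_drop {w : List A} (hw : w ∈ Λ.LStar) (n : ℕ) : w.drop n ∈ Λ.LStar := by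
  rcases eq_or_ne (w.drop n) [] with h | h
  · exact Or.inl h
  rcases hw with rfl | ⟨l, hne, hch, hmap⟩
  · simp at h
  right
  refine ⟨l.drop n, ?_, hch.suffix (List.drop_suffix _ _), ?_⟩
  · intro h0
    apply h
    rw [← hmap, ← List.map_drop, h0, List.map_nil]
  · rw [List.map_drop, hmap]

/-! ### Computations of products in `S` -/

lemma tmul_up (u τ : List A) (B C : Set V) :
    Λ.tmul (Tr.mk u B u) (Tr.mk (u ++ τ) C (u ++ τ)) =
      if (Λ.relRange B τ ∩ C).Nonempty then Tr.mk (u ++ τ) (Λ.relRange B τ ∩ C) (u ++ τ)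
      else Tr.zero := by
  simp only [tmul, List.drop_left]
  by_cases hne : (Λ.relRange B τ ∩ C).Nonempty
  · rw [if_pos ⟨List.prefix_append u τ, hne⟩, if_pos hne]
  · rw [if_neg (by tauto), if_neg hne, if_neg ?_]
    rintro ⟨hp, hcond⟩
    have hτ : τ = [] := by
      have := hp.length_le
      simp only [List.length_append] at this
      exact List.eq_nil_of_length_eq_zero (by omega)
    subst hτ
    apply hne
    rw [Λ.relRange_nil]
    rwa [List.append_nil, List.drop_length, Λ.relRange_nil] at hcond

lemma tmul_down (u τ : List A) (B C : Set V) :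
    Λ.tmul (Tr.mk (u ++ τ) C (u ++ τ)) (Tr.mk u B u) =
      if (C ∩ Λ.relRange B τ).Nonempty then Tr.mk (u ++ τ) (C ∩ Λ.relRange B τ) (u ++ τ)
      else Tr.zero := by
  simp only [tmul, List.drop_left]
  rcases eq_or_ne τ [] with rfl | hτ
  · simp only [List.append_nil, List.drop_length, Λ.relRange_nil]
    by_cases hne : (C ∩ B).Nonempty
    · rw [if_pos ⟨List.prefix_rfl, hne⟩, if_pos hne]
    · rw [if_neg (fun h => hne h.2), if_neg (fun h => hne h.2), if_neg hne]
  · have hlen1 : ¬(u ++ τ <+: u ∧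
        (Λ.relRange C (u.drop (u ++ τ).length) ∩ B).Nonempty) := by
      rintro ⟨hp, -⟩
      have := hp.length_le
      simp only [List.length_append] at this
      exact hτ (List.eq_nil_of_length_eq_zero (by omega))
    by_cases hne : (C ∩ Λ.relRange B τ).Nonempty
    · rw [if_neg hlen1, if_pos ⟨List.prefix_append u τ, hne⟩, if_pos hne]
    · rw [if_neg hlen1, if_neg (fun h => hne h.2), if_neg hne]

lemma tmul_comparable {c e : List A} {Xc Ye : Set V}
    (h : Λ.tmul (Tr.mk c Xc c) (Tr.mk e Ye e) ≠ Tr.zero) : c <+: e ∨ e <+: c := by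
  by_cases h1 : c <+: e
  · exact Or.inl h1
  by_cases h2 : e <+: c
  · exact Or.inr h2
  exfalso
  apply h
  simp only [tmul]
  rw [if_neg (by tauto), if_neg (by tauto)]

/-! ### Elements of `S`, `E(S)` and filters -/

lemma sset_elim {a b : List A} {X : Set V} (h : Tr.mk a X b ∈ Λ.SSet) :
    a ∈ Λ.LStar ∧ b ∈ Λ.LStar ∧ X ∈ Λ.Aset a ∧ X ∈ Λ.Aset b ∧ X.Nonempty := by
  rcases h with h | ⟨a', X', b', heq, h1, h2, h3, h4, h5⟩
  · exact (by cases h)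
  · injection heq with e1 e2 e3
    subst e1; subst e2; subst e3
    exact ⟨h1, h2, h3, h4, h5⟩

lemma eset_mk {a : List A} {X : Set V} (h1 : a ∈ Λ.LStar) (h2 : X ∈ Λ.Aset a)
    (h3 : X.Nonempty) : Tr.mk a X a ∈ Λ.ESet :=
  Or.inr ⟨a, X, rfl, h1, h2, h3⟩

lemma eset_elim {a b : List A} {X : Set V} (h : Tr.mk a X b ∈ Λ.ESet) :
    b = a ∧ a ∈ Λ.LStar ∧ X ∈ Λ.Aset a ∧ X.Nonempty := by
  rcases h with h | ⟨a', X', heq, h1, h2, h3⟩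
  · exact (by cases h)
  · injection heq with e1 e2 e3
    subst e1; subst e2; subst e3
    exact ⟨rfl, h1, h2, h3⟩

lemma filt_mem_eset {ξ : Set (Tr V A)} (hf : Λ.IsFilterES ξ) {a b : List A} {X : Set V}
    (h : Tr.mk a X b ∈ ξ) :
    b = a ∧ a ∈ Λ.LStar ∧ X ∈ Λ.Aset a ∧ X.Nonempty :=
  Λ.eset_elim (hf.2.1 _ h).1

lemma filt_up {ξ : Set (Tr V A)} (hf : Λ.IsFilterES ξ) {u τ : List A} {D B : Set V}
    (hD : Tr.mk (u ++ τ) D (u ++ τ) ∈ ξ) (hB : B ∈ Λ.Aset u)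
    (hsub : D ⊆ Λ.relRange B τ) : Tr.mk u B u ∈ ξ := by
  have h1 := Λ.filt_mem_eset hf hD
  have hDne : D.Nonempty := h1.2.2.2
  have hBne : B.Nonempty := Λ.nonempty_of_relRange (hDne.mono hsub)
  have huL : u ∈ Λ.LStar := Λ.lstar_prefix (List.prefix_append u τ) h1.2.1
  apply hf.2.2.2 _ hD _ (Λ.eset_mk huL hB hBne)
  rw [Λ.tmul_down, Set.inter_eq_left.mpr hsub, if_pos hDne]

lemma filt_up_nil {ξ : Set (Tr V A)} (hf : Λ.IsFilterES ξ) {u : List A} {D B : Set V}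
    (hD : Tr.mk u D u ∈ ξ) (hB : B ∈ Λ.Aset u) (hsub : D ⊆ B) : Tr.mk u B u ∈ ξ :=
  Λ.filt_up hf (u := u) (τ := []) (by simpa using hD) hB (by rwa [Λ.relRange_nil])

/-! ### The cutting map -/

lemma Hcut_nil (ξ : Set (Tr V A)) : Λ.Hcut [] ξ = ξ := by simp [Hcut]

lemma mem_Hcut_iff {a : List A} (ha : a ≠ []) {ξ : Set (Tr V A)} {t : Tr V A} :
    t ∈ Λ.Hcut a ξ ↔ ∃ ρ B, t = Tr.mk ρ B ρ ∧ B ∈ Λ.Aset ρ ∧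
      ∃ D, Tr.mk (a ++ ρ) D (a ++ ρ) ∈ ξ ∧ D ⊆ B := by
  rw [Hcut, if_neg ha]
  exact Iff.rfl

lemma hasWord_Hcut {ξ : Set (Tr V A)} {a : List A} {w : Word A}
    (hmem : ∀ t ∈ ξ, t ∈ Λ.ESet ∧ t ≠ Tr.zero)
    (hw : Λ.HasWord ξ (wappend a w)) : Λ.HasWord (Λ.Hcut a ξ) w := by
  rcases eq_or_ne a [] with rfl | ha
  · rw [wappend_nil] at hw
    rwa [Λ.Hcut_nil]
  intro ρ hρ
  constructor
  · rintro ⟨B, hB⟩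
    obtain ⟨ρ', B', heq, hB', D, hD, -⟩ := (Λ.mem_Hcut_iff ha).1 hB
    injection heq with e1 e2 e3
    subst e1
    have := (hw (a ++ ρ) (by simp [ha])).1 ⟨D, hD⟩
    exact (wprefix_append_iff a ρ w).1 this
  · intro hρw
    obtain ⟨D, hD⟩ := (hw (a ++ ρ) (by simp [ha])).2 ((wprefix_append_iff a ρ w).2 hρw)
    have hDA := Λ.eset_elim (hmem _ hD).1
    exact ⟨D, (Λ.mem_Hcut_iff ha).2 ⟨ρ, D, rfl,
      ⟨hDA.2.2.1.1, hDA.2.2.1.2.trans (Λ.rangeL_append a ρ)⟩, D, hD, Set.Subset.rfl⟩⟩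

lemma Hcut_comp {ξ : Set (Tr V A)} (hmem : ∀ t ∈ ξ, t ∈ Λ.ESet ∧ t ≠ Tr.zero)
    (a d : List A) : Λ.Hcut d (Λ.Hcut a ξ) = Λ.Hcut (a ++ d) ξ := by
  rcases eq_or_ne a [] with rfl | ha
  · rw [Λ.Hcut_nil, List.nil_append]
  rcases eq_or_ne d [] with rfl | hd
  · rw [Λ.Hcut_nil, List.append_nil]
  have had : a ++ d ≠ [] := by simp [ha]
  ext t
  rw [Λ.mem_Hcut_iff hd, Λ.mem_Hcut_iff had]
  constructor
  · rintro ⟨ρ, B, rfl, hB, D', hD', hsub⟩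
    obtain ⟨ρ₂, D'', heq, hD''A, D, hD, hsubD⟩ := (Λ.mem_Hcut_iff ha).1 hD'
    injection heq with e1 e2 e3
    subst e1
    rw [← e2] at hsubD
    exact ⟨ρ, B, rfl, hB, D, by rwa [← List.append_assoc] at hD, hsubD.trans hsub⟩
  · rintro ⟨ρ, B, rfl, hB, D, hD, hsub⟩
    have hDA := Λ.eset_elim (hmem _ hD).1
    refine ⟨ρ, B, rfl, hB, D, (Λ.mem_Hcut_iff ha).2 ⟨d ++ ρ, D, rfl, ⟨hDA.2.2.1.1, ?_⟩, D,
      by rwa [List.append_assoc] at hD, Set.Subset.rfl⟩, hsub⟩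
    have := hDA.2.2.1.2
    rw [List.append_assoc] at this
    exact this.trans (Λ.rangeL_append a (d ++ ρ))

lemma isFilterES_Hcut (hwlr : Λ.IsWLR) {ξ : Set (Tr V A)} {a : List A} {w : Word A}
    (hf : Λ.IsFilterES ξ) (hw : Λ.HasWord ξ (wappend a w)) :
    Λ.IsFilterES (Λ.Hcut a ξ) := by
  rcases eq_or_ne a [] with rfl | ha
  · rwa [Λ.Hcut_nil]
  refine ⟨?_, ?_, ?_, ?_⟩
  · -- nonempty
    obtain ⟨D, hD⟩ := (hw a ha).2 (wprefix_self a w)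
    have hDA := Λ.filt_mem_eset hf hD
    refine ⟨Tr.mk [] D [], (Λ.mem_Hcut_iff ha).2 ⟨[], D, rfl,
      ⟨hDA.2.2.1.1, by rw [Λ.rangeL_nil]; exact Set.subset_univ _⟩, D,
      by rwa [List.append_nil], Set.Subset.rfl⟩⟩
  · -- elements are nonzero idempotents
    intro t ht
    obtain ⟨ρ, B, rfl, hBA, D, hD, hsub⟩ := (Λ.mem_Hcut_iff ha).1 ht
    have h1 := Λ.filt_mem_eset hf hD
    have hρ : ρ ∈ Λ.LStar := by
      have := Λ.lstar_drop h1.2.1 a.length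
      rwa [List.drop_left] at this
    exact ⟨Λ.eset_mk hρ hBA (h1.2.2.2.mono hsub), fun h => (by cases h)⟩
  · -- closed under products
    intro p hp q hq
    obtain ⟨ρ1, B1, rfl, hB1, D1, hD1, hs1⟩ := (Λ.mem_Hcut_iff ha).1 hp
    obtain ⟨ρ2, B2, rfl, hB2, D2, hD2, hs2⟩ := (Λ.mem_Hcut_iff ha).1 hq
    have hprod := hf.2.2.1 _ hD1 _ hD2
    have hnz := (hf.2.1 _ hprod).2
    rcases Λ.tmul_comparable hnz with hcomp | hcomp
    · obtain ⟨τ, rfl⟩ := prefix_cancel hcomp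
      rw [show a ++ (ρ1 ++ τ) = (a ++ ρ1) ++ τ from (List.append_assoc a ρ1 τ).symm,
        Λ.tmul_up] at hprod hnz
      have hc : (Λ.relRange D1 τ ∩ D2).Nonempty := by
        by_contra hc
        rw [if_neg hc] at hnz
        exact hnz rfl
      rw [if_pos hc] at hprod
      have hτL : τ ∈ Λ.LStar := by
        have := Λ.lstar_drop (Λ.filt_mem_eset hf hD2).2.1 (a ++ ρ1).length
        rwa [show a ++ (ρ1 ++ τ) = (a ++ ρ1) ++ τ from (List.append_assoc a ρ1 τ).symm,
          List.drop_left] at this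
      have hgoalne : (Λ.relRange B1 τ ∩ B2).Nonempty :=
        hc.mono (Set.inter_subset_inter (Λ.relRange_mono hs1 τ) hs2)
      rw [Λ.tmul_up, if_pos hgoalne]
      refine (Λ.mem_Hcut_iff ha).2 ⟨ρ1 ++ τ, _, rfl,
        ⟨hwlr.toIsLS.inter_mem _ (hwlr.toIsLS.relRange_mem B1 hB1.1 τ hτL) _ hB2.1,
          Set.inter_subset_right.trans hB2.2⟩,
        Λ.relRange D1 τ ∩ D2, by rwa [List.append_assoc] at hprod,
        Set.inter_subset_inter (Λ.relRange_mono hs1 τ) hs2⟩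
    · obtain ⟨τ, rfl⟩ := prefix_cancel hcomp
      rw [show a ++ (ρ2 ++ τ) = (a ++ ρ2) ++ τ from (List.append_assoc a ρ2 τ).symm,
        Λ.tmul_down] at hprod hnz
      have hc : (D1 ∩ Λ.relRange D2 τ).Nonempty := by
        by_contra hc
        rw [if_neg hc] at hnz
        exact hnz rfl
      rw [if_pos hc] at hprod
      have hτL : τ ∈ Λ.LStar := by
        have := Λ.lstar_drop (Λ.filt_mem_eset hf hD1).2.1 (a ++ ρ2).length
        rwa [show a ++ (ρ2 ++ τ) = (a ++ ρ2) ++ τ from (List.append_assoc a ρ2 τ).symm,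
          List.drop_left] at this
      have hgoalne : (B1 ∩ Λ.relRange B2 τ).Nonempty :=
        hc.mono (Set.inter_subset_inter hs1 (Λ.relRange_mono hs2 τ))
      rw [Λ.tmul_down, if_pos hgoalne]
      refine (Λ.mem_Hcut_iff ha).2 ⟨ρ2 ++ τ, _, rfl,
        ⟨hwlr.toIsLS.inter_mem _ hB1.1 _ (hwlr.toIsLS.relRange_mem B2 hB2.1 τ hτL),
          Set.inter_subset_left.trans hB1.2⟩,
        D1 ∩ Λ.relRange D2 τ, by rwa [List.append_assoc] at hprod,
        Set.inter_subset_inter hs1 (Λ.relRange_mono hs2 τ)⟩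
  · -- upward closed
    intro p hp q hq hpq
    obtain ⟨ρ, B, rfl, hBA, D, hD, hsub⟩ := (Λ.mem_Hcut_iff ha).1 hp
    rcases hq with rfl | ⟨ρ', B', rfl, hρ'L, hB', hB'ne⟩
    · simp only [tmul] at hpq
      exact (by cases hpq)
    have hnz : Λ.tmul (Tr.mk ρ B ρ) (Tr.mk ρ' B' ρ') ≠ Tr.zero := by
      rw [hpq]; exact fun h => (by cases h)
    rcases Λ.tmul_comparable hnz with hcomp | hcomp
    · -- ρ <+: ρ' : forces ρ' = ρ and B ⊆ B'
      obtain ⟨τ, rfl⟩ := hcomp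
      rw [Λ.tmul_up] at hpq
      have hc : (Λ.relRange B τ ∩ B').Nonempty := by
        by_contra hc
        rw [if_neg hc] at hpq
        exact (by cases hpq)
      rw [if_pos hc] at hpq
      injection hpq with e1 e2 e3
      have hτ : τ = [] := by
        have := congrArg List.length e1
        simp only [List.length_append] at this
        exact List.eq_nil_of_length_eq_zero (by omega)
      subst hτ
      rw [Λ.relRange_nil] at e2
      have hBB' : B ⊆ B' := by
        rw [← e2]; exact Set.inter_subset_right
      exact (Λ.mem_Hcut_iff ha).2 ⟨ρ ++ [], B', rfl, hB', D,
        by simpa using hD, hsub.trans hBB'⟩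
    · -- ρ' <+: ρ
      obtain ⟨τ, rfl⟩ := hcomp
      rw [Λ.tmul_down] at hpq
      have hc : (B ∩ Λ.relRange B' τ).Nonempty := by
        by_contra hc
        rw [if_neg hc] at hpq
        exact (by cases hpq)
      rw [if_pos hc] at hpq
      injection hpq with e1 e2 e3
      have hBsub : B ⊆ Λ.relRange B' τ := by
        rw [← e2]; exact Set.inter_subset_right
      rcases eq_or_ne τ [] with rfl | hτ
      · rw [Λ.relRange_nil] at hBsub
        exact (Λ.mem_Hcut_iff ha).2 ⟨ρ', B', rfl, hB', D, by simpa using hD,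
          hsub.trans hBsub⟩
      -- the essential case : τ ≠ []
      have hwp : WPrefix (a ++ (ρ' ++ τ)) (wappend a w) :=
        (hw (a ++ (ρ' ++ τ)) (by simp [ha])).1 ⟨D, hD⟩
      have hwp' : WPrefix (a ++ ρ') (wappend a w) :=
        wprefix_prefix ⟨τ, by rw [List.append_assoc]⟩ hwp
      obtain ⟨E₀, hE₀⟩ := (hw (a ++ ρ') (by simp [ha])).2 hwp'
      rw [show a ++ (ρ' ++ τ) = (a ++ ρ') ++ τ from (List.append_assoc a ρ' τ).symm] at hD
      have hprod := hf.2.2.1 _ hE₀ _ hD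
      rw [Λ.tmul_up] at hprod
      have hc2 : (Λ.relRange E₀ τ ∩ D).Nonempty := by
        by_contra hc2
        rw [if_neg hc2] at hprod
        exact (hf.2.1 _ hprod).2 rfl
      rw [if_pos hc2] at hprod
      have hE₀i := Λ.filt_mem_eset hf hE₀
      have hτL : τ ∈ Λ.LStar := by
        have := Λ.lstar_drop (Λ.filt_mem_eset hf hD).2.1 (a ++ ρ').length
        rwa [List.drop_left] at this
      have hwlreq := hwlr.wlr E₀ hE₀i.2.2.1.1 B' hB'.1 τ hτL hτ
      have hsubD : Λ.relRange E₀ τ ∩ D ⊆ Λ.relRange (E₀ ∩ B') τ := by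
        rw [hwlreq]
        exact Set.inter_subset_inter Set.Subset.rfl (hsub.trans hBsub)
      have hmem' : Tr.mk (a ++ ρ') (E₀ ∩ B') (a ++ ρ') ∈ ξ :=
        Λ.filt_up hf hprod
          ⟨hwlr.toIsLS.inter_mem _ hE₀i.2.2.1.1 _ hB'.1,
            Set.inter_subset_left.trans hE₀i.2.2.1.2⟩ hsubD
      exact (Λ.mem_Hcut_iff ha).2 ⟨ρ', B', rfl, hB', E₀ ∩ B', hmem',
        Set.inter_subset_right⟩

lemma cut_subset {ξ₁ ξ₂ : Set (Tr V A)} {d : List A} {γ : Word A} (hd : d ≠ [])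
    (h₁ : Λ.IsFilterES ξ₁) (h₂ : Λ.IsFilterES ξ₂)
    (hw₁ : Λ.HasWord ξ₁ (wappend d γ))
    (h : Λ.Hcut d ξ₁ = Λ.Hcut d ξ₂) : ξ₁ ⊆ ξ₂ := by
  intro t ht
  obtain ⟨hE, hnz⟩ := h₁.2.1 t ht
  rcases hE with rfl | ⟨w0, B, rfl, hwL, hBA, hBne⟩
  · exact absurd rfl hnz
  rcases le_or_gt d.length w0.length with hlen | hlen
  · -- w0 = d ++ ρ
    have hw0ne : w0 ≠ [] := by
      intro h0
      rw [h0] at hlen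
      simp only [List.length_nil, Nat.le_zero] at hlen
      exact hd (List.eq_nil_of_length_eq_zero hlen)
    have hdw : d <+: w0 :=
      wprefix_comp (wprefix_self d γ) ((hw₁ w0 hw0ne).1 ⟨B, ht⟩) hlen
    obtain ⟨ρ, rfl⟩ := hdw
    have hmem1 : Tr.mk ρ B ρ ∈ Λ.Hcut d ξ₁ := (Λ.mem_Hcut_iff hd).2 ⟨ρ, B, rfl,
      ⟨hBA.1, hBA.2.trans (Λ.rangeL_append d ρ)⟩, B, ht, Set.Subset.rfl⟩
    rw [h] at hmem1
    obtain ⟨ρ', B', heq, hB', D₂, hD₂, hs₂⟩ := (Λ.mem_Hcut_iff hd).1 hmem1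
    injection heq with e1 e2 e3
    subst e1
    rw [← e2] at hs₂
    exact Λ.filt_up_nil h₂ hD₂ hBA hs₂
  · -- w0 <+: d, proper
    have hw0d : w0 <+: d := by
      rcases eq_or_ne w0 [] with rfl | h0
      · exact List.nil_prefix
      · exact wprefix_comp ((hw₁ w0 h0).1 ⟨B, ht⟩) (wprefix_self d γ) hlen.le
    obtain ⟨τ, rfl⟩ := hw0d
    obtain ⟨D₀, hD₀⟩ := (hw₁ (w0 ++ τ) hd).2 (wprefix_self _ γ)
    have hprod := h₁.2.2.1 _ hD₀ _ ht
    rw [Λ.tmul_down] at hprod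
    have hc : (D₀ ∩ Λ.relRange B τ).Nonempty := by
      by_contra hc
      rw [if_neg hc] at hprod
      exact (h₁.2.1 _ hprod).2 rfl
    rw [if_pos hc] at hprod
    have hD𝒜 : D₀ ∩ Λ.relRange B τ ∈ Λ.Aset ([] : List A) :=
      ⟨(Λ.filt_mem_eset h₁ hprod).2.2.1.1, by rw [Λ.rangeL_nil]; exact Set.subset_univ _⟩
    have hm : Tr.mk [] (D₀ ∩ Λ.relRange B τ) [] ∈ Λ.Hcut (w0 ++ τ) ξ₁ :=
      (Λ.mem_Hcut_iff hd).2 ⟨[], _, rfl, hD𝒜, _, by simpa using hprod, Set.Subset.rfl⟩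
    rw [h] at hm
    obtain ⟨ρ', B', heq, hB', D₂, hD₂, hs₂⟩ := (Λ.mem_Hcut_iff hd).1 hm
    injection heq with e1 e2 e3
    subst e1
    rw [← e2] at hs₂
    rw [List.append_nil] at hD₂
    exact Λ.filt_up h₂ hD₂ hBA (hs₂.trans Set.inter_subset_right)

lemma cut_inj {ξ₁ ξ₂ : Set (Tr V A)} {d : List A} {γ : Word A}
    (h₁ : Λ.IsFilterES ξ₁) (h₂ : Λ.IsFilterES ξ₂)
    (hw₁ : Λ.HasWord ξ₁ (wappend d γ)) (hw₂ : Λ.HasWord ξ₂ (wappend d γ))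
    (h : Λ.Hcut d ξ₁ = Λ.Hcut d ξ₂) : ξ₁ = ξ₂ := by
  rcases eq_or_ne d [] with rfl | hd
  · rw [Λ.Hcut_nil, Λ.Hcut_nil] at h
    exact h
  exact Set.Subset.antisymm (Λ.cut_subset hd h₁ h₂ hw₁ h)
    (Λ.cut_subset hd h₂ h₁ hw₂ h.symm)

/-! ### Membership in `Z_{(μ,X,ν)}` -/

lemma mem_Zraw_iff {μ ν : List A} {X : Set V} {p : Set (Tr V A) × ℤ × Set (Tr V A)} :
    p ∈ Λ.Zraw μ X ν ↔ Λ.InGamma p.1 p.2.1 p.2.2 ∧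
      p.2.1 = (μ.length : ℤ) - (ν.length : ℤ) ∧ Tr.mk ν X ν ∈ p.2.2 ∧
      ∃ γ : Word A, Λ.HasWord p.1 (wappend μ γ) ∧ Λ.HasWord p.2.2 (wappend ν γ) ∧
        Λ.Hcut μ p.1 = Λ.Hcut ν p.2.2 := by
  constructor
  · rintro ⟨h1, h2, h3, -, h5⟩
    exact ⟨h1, h2, h3, h5⟩
  · rintro ⟨h1, h2, h3, h5⟩
    exact ⟨h1, h2, h3, by simp, h5⟩

lemma InGamma_filters {η ξ : Set (Tr V A)} {m : ℤ} (h : Λ.InGamma η m ξ) :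
    Λ.IsFilterES η ∧ Λ.IsFilterES ξ := by
  obtain ⟨a, b, γ, -, -, -, hη, hξ, -, -⟩ := h
  exact ⟨hη.1.1, hξ.1.1⟩

/-! ### The two main computations -/

lemma Zraw_inter_of_ext (hΛ : Λ.IsNormal) (α β δ : List A) (X Y : Set V)
    (hs : Tr.mk α X β ∈ Λ.SSet) (ht : Tr.mk (α ++ δ) Y (β ++ δ) ∈ Λ.SSet)
    (hne : (Λ.relRange X δ ∩ Y).Nonempty) :
    Λ.Zraw α X β ∩ Λ.Zraw (α ++ δ) Y (β ++ δ) =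
      Λ.Zraw (α ++ δ) (Λ.relRange X δ ∩ Y) (β ++ δ) := by
  have hsE := Λ.sset_elim hs
  have htE := Λ.sset_elim ht
  ext p
  simp only [Set.mem_inter_iff, Λ.mem_Zraw_iff]
  constructor
  · rintro ⟨⟨hΓ, hmid1, hX, hγ1⟩, ⟨-, hmid2, hY, hγ2⟩⟩
    have hξf := (Λ.InGamma_filters hΓ).2
    refine ⟨hΓ, hmid2, ?_, hγ2⟩
    have hprod := hξf.2.2.1 _ hX _ hY
    rwa [Λ.tmul_up, if_pos hne] at hprod
  · rintro ⟨hΓ, hmid, hC, hγ⟩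
    have hξf := (Λ.InGamma_filters hΓ).2
    have hηf := (Λ.InGamma_filters hΓ).1
    obtain ⟨γ, hwη, hwξ, hcut⟩ := hγ
    have hwη' : Λ.HasWord p.1 (wappend α (wappend δ γ)) := by
      rwa [wappend_assoc]
    have hwξ' : Λ.HasWord p.2.2 (wappend β (wappend δ γ)) := by
      rwa [wappend_assoc]
    refine ⟨⟨hΓ, ?_, ?_, ?_⟩, hΓ, hmid, ?_, γ, hwη, hwξ, hcut⟩
    · rw [hmid]
      simp only [List.length_append]
      push_cast
      ring
    · exact Λ.filt_up hξf hC hsE.2.2.2.1 Set.inter_subset_left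
    · refine ⟨wappend δ γ, hwη', hwξ', ?_⟩
      rcases eq_or_ne δ [] with rfl | hδ
      · simpa using hcut
      · refine Λ.cut_inj (d := δ) (γ := γ)
          (Λ.isFilterES_Hcut hΛ.toIsWLR hηf hwη')
          (Λ.isFilterES_Hcut hΛ.toIsWLR hξf hwξ')
          (Λ.hasWord_Hcut hηf.2.1 hwη')
          (Λ.hasWord_Hcut hξf.2.1 hwξ') ?_
        rw [Λ.Hcut_comp hηf.2.1, Λ.Hcut_comp hξf.2.1]
        exact hcut
    · exact Λ.filt_up_nil hξf hC htE.2.2.2.1 Set.inter_subset_right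

lemma Zraw_config {α β μ ν : List A} {X Y : Set V}
    {p : Set (Tr V A) × ℤ × Set (Tr V A)}
    (h1 : p ∈ Λ.Zraw α X β) (h2 : p ∈ Λ.Zraw μ Y ν) (hlen : β.length ≤ ν.length) :
    ∃ δ, μ = α ++ δ ∧ ν = β ++ δ ∧ (Λ.relRange X δ ∩ Y).Nonempty := by
  rw [Λ.mem_Zraw_iff] at h1 h2
  obtain ⟨hΓ, hm1, hX, γ1, hwη1, hwξ1, -⟩ := h1
  obtain ⟨-, hm2, hY, γ2, hwη2, hwξ2, -⟩ := h2
  have hξf := (Λ.InGamma_filters hΓ).2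
  have hβν : β <+: ν := by
    rcases eq_or_ne β [] with rfl | hβ
    · exact List.nil_prefix
    have hν : ν ≠ [] := by
      intro h0
      rw [h0] at hlen
      simp only [List.length_nil, Nat.le_zero] at hlen
      exact hβ (List.eq_nil_of_length_eq_zero hlen)
    exact wprefix_comp ((hwξ2 β hβ).1 ⟨X, hX⟩) (wprefix_self ν γ2) hlen
  obtain ⟨δ, rfl⟩ := hβν
  have hnonempty : (Λ.relRange X δ ∩ Y).Nonempty := by
    have hprod := hξf.2.2.1 _ hX _ hY
    rw [Λ.tmul_up] at hprod
    by_contra hc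
    rw [if_neg hc] at hprod
    exact (hξf.2.1 _ hprod).2 rfl
  refine ⟨δ, ?_, rfl, hnonempty⟩
  have hlenμ : μ.length = α.length + δ.length := by
    have e1 : (α.length : ℤ) - β.length = (μ.length : ℤ) - ((β ++ δ).length : ℤ) := by
      rw [← hm1, ← hm2]
    simp only [List.length_append] at e1
    omega
  rcases eq_or_ne μ [] with rfl | hμ
  · simp only [List.length_nil] at hlenμ
    obtain ⟨e1, e2⟩ : α.length = 0 ∧ δ.length = 0 := by omega
    rw [List.eq_nil_of_length_eq_zero e1, List.eq_nil_of_length_eq_zero e2]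
    rfl
  · have hwμ : WPrefix μ (wappend α γ1) := by
      obtain ⟨B₀, hB₀⟩ := (hwη2 μ hμ).2 (wprefix_self μ γ2)
      exact (hwη1 μ hμ).1 ⟨B₀, hB₀⟩
    have hwαδ : WPrefix (α ++ δ) (wappend α γ1) := by
      rw [wprefix_append_iff]
      rcases eq_or_ne δ [] with rfl | hδ
      · exact wprefix_nil γ1
      · have hνne : β ++ δ ≠ [] := by simp [hδ]
        have := (hwξ1 (β ++ δ) hνne).1 ⟨Y, hY⟩
        exact (wprefix_append_iff β δ γ1).1 this
    exact wprefix_eq hwμ hwαδ (by simp [hlenμ])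

/-- For nonzero `(α, X, β), (μ, Y, ν) ∈ S`, the intersection
`Z_{(α,X,β)} ∩ Z_{(μ,Y,ν)}` equals `Z_{(μ, r(X,δ) ∩ Y, ν)}` if `μ = αδ`, `ν = βδ` and
`r(X,δ) ∩ Y ≠ ∅`; it equals `Z_{(α, X ∩ r(Y,δ), β)}` if `α = μδ`, `β = νδ` and
`X ∩ r(Y,δ) ≠ ∅`; and it is empty otherwise. -/
theorem statement_13 (hΛ : Λ.IsNormal) (α β μ ν : List A) (X Y : Set V)
    (hs : Tr.mk α X β ∈ Λ.SSet) (ht : Tr.mk μ Y ν ∈ Λ.SSet) :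
    (∀ δ : List A, μ = α ++ δ → ν = β ++ δ → (Λ.relRange X δ ∩ Y).Nonempty →
      Λ.Zraw α X β ∩ Λ.Zraw μ Y ν = Λ.Zraw μ (Λ.relRange X δ ∩ Y) ν) ∧
    (∀ δ : List A, α = μ ++ δ → β = ν ++ δ → (X ∩ Λ.relRange Y δ).Nonempty →
      Λ.Zraw α X β ∩ Λ.Zraw μ Y ν = Λ.Zraw α (X ∩ Λ.relRange Y δ) β) ∧
    ((¬ ∃ δ : List A, μ = α ++ δ ∧ ν = β ++ δ ∧ (Λ.relRange X δ ∩ Y).Nonempty) →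
     (¬ ∃ δ : List A, α = μ ++ δ ∧ β = ν ++ δ ∧ (X ∩ Λ.relRange Y δ).Nonempty) →
      Λ.Zraw α X β ∩ Λ.Zraw μ Y ν = ∅) := by
  refine ⟨?_, ?_, ?_⟩
  · intro δ hμ hν hne
    subst hμ; subst hν
    exact Λ.Zraw_inter_of_ext hΛ α β δ X Y hs ht hne
  · intro δ hα hβ hne
    subst hα; subst hβ
    have h := Λ.Zraw_inter_of_ext hΛ μ ν δ Y X ht hs (by rwa [Set.inter_comm])
    rw [Set.inter_comm (Λ.Zraw (μ ++ δ) X (ν ++ δ)) (Λ.Zraw μ Y ν),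
      Set.inter_comm X (Λ.relRange Y δ)]
    exact h
  · intro hn1 hn2
    ext p
    simp only [Set.mem_inter_iff, Set.mem_empty_iff_false, iff_false]
    rintro ⟨h1, h2⟩
    rcases le_total β.length ν.length with hl | hl
    · exact hn1 (Λ.Zraw_config h1 h2 hl)
    · obtain ⟨δ, ha, hb, hc⟩ := Λ.Zraw_config h2 h1 hl
      exact hn2 ⟨δ, ha, hb, by rwa [Set.inter_comm]⟩

end LblSp
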